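/- Let B be a weak*-separable boundary for X and A a bounded infinite subset of X. Then there exists a countably infinite set F ⊆ A such that the norm-closed convex hull of F equals the σ_B-closed convex hull of F. -/

import Mathlib

noncomputable section
open Filter Topology Set NormedSpace Pointwise

variable {X : Type*} [NormedAddCommGroup X] [NormedSpace ℝ X] [CompleteSpace X]

/-- `B` is a boundary for `X`: a subset of the dual unit sphere on which every
element of `X` attains its norm. -/
def IsBoundary (B : Set (StrongDual ℝ X)) : Prop :=
  (∀ f ∈ B, ‖f‖ = 1) ∧ ∀ x : X, ∃ f ∈ B, f x = ‖x‖

/-- The closure of `S` in the topology `σ_B` of pointwise convergence on `B`. -/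
def sigmaClosure (B : Set (StrongDual ℝ X)) (S : Set X) : Set X :=
  {x | ∀ ε > (0 : ℝ), ∀ F : Finset (StrongDual ℝ X), (F : Set (StrongDual ℝ X)) ⊆ B →
    ∃ y ∈ S, ∀ f ∈ F, |f x - f y| < ε}

/-- The weak*-closure of a set of functionals (pointwise convergence on the predual). -/
def weakStarClosure {Y : Type*} [NormedAddCommGroup Y] [NormedSpace ℝ Y]
    (S : Set (StrongDual ℝ Y)) : Set (StrongDual ℝ Y) :=
  {φ | ∀ ε > (0 : ℝ), ∀ F : Finset Y, ∃ ψ ∈ S, ∀ y ∈ F, |φ y - ψ y| < ε}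

/-- `B` is separable in the weak* topology. -/
def WeakStarSeparable (B : Set (StrongDual ℝ X)) : Prop :=
  ∃ D ⊆ B, D.Countable ∧ B ⊆ weakStarClosure D

set_option linter.unusedSectionVars false

lemma dual_apply_le {f : StrongDual ℝ X} (hf : ‖f‖ = 1) (v : X) : f v ≤ ‖v‖ := by
  calc f v ≤ |f v| := le_abs_self _
  _ = ‖f v‖ := rfl
  _ ≤ ‖f‖ * ‖v‖ := f.le_opNorm v
  _ = ‖v‖ := by rw [hf, one_mul]

lemma dual_abs_apply_le {f : StrongDual ℝ X} (hf : ‖f‖ = 1) (v : X) : |f v| ≤ ‖v‖ := by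
  have : |f v| = ‖f v‖ := rfl
  rw [this]
  calc ‖f v‖ ≤ ‖f‖ * ‖v‖ := f.le_opNorm v
  _ = ‖v‖ := by rw [hf, one_mul]

lemma closure_subset_sigmaClosure (B : Set (StrongDual ℝ X)) (hB1 : ∀ f ∈ B, ‖f‖ = 1)
    (S : Set X) : closure S ⊆ sigmaClosure B S := by
  intro x hx ε hε F hFB
  obtain ⟨y, hyS, hxy⟩ := Metric.mem_closure_iff.1 hx ε hε
  refine ⟨y, hyS, fun f hf => ?_⟩
  have h1 : |f x - f y| = |f (x - y)| := by rw [map_sub]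
  rw [h1]
  calc |f (x - y)| ≤ ‖x - y‖ := dual_abs_apply_le (hB1 f (hFB hf)) _
  _ = dist x y := (dist_eq_norm x y).symm
  _ < ε := hxy

lemma convexHull_norm_le {s : Set X} {M : ℝ} (h : ∀ y ∈ s, ‖y‖ ≤ M) :
    ∀ y ∈ convexHull ℝ s, ‖y‖ ≤ M := by
  intro y hy
  have hsub : convexHull ℝ s ⊆ Metric.closedBall 0 M := by
    apply convexHull_min _ (convex_closedBall 0 M)
    intro z hz; simpa [Metric.mem_closedBall, dist_zero_right] using h z hz
  simpa [Metric.mem_closedBall, dist_zero_right] using hsub hy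


/-- Finite representation of elements of the convex hull of a range. -/
lemma repr_convexHull_range (x : ℕ → X) {y : X} (hy : y ∈ convexHull ℝ (Set.range x)) :
    ∃ (N : ℕ) (μ : ℕ → ℝ), (∀ n, 0 ≤ μ n) ∧ (∀ n, N ≤ n → μ n = 0) ∧
      (∑ n ∈ Finset.range N, μ n = 1) ∧ y = ∑ n ∈ Finset.range N, μ n • x n := by
  set S : Set X := {y | ∃ (N : ℕ) (μ : ℕ → ℝ), (∀ n, 0 ≤ μ n) ∧ (∀ n, N ≤ n → μ n = 0) ∧
      (∑ n ∈ Finset.range N, μ n = 1) ∧ y = ∑ n ∈ Finset.range N, μ n • x n} with hS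
  have hsub : convexHull ℝ (Set.range x) ⊆ S := by
    apply convexHull_min
    · rintro _ ⟨m, rfl⟩
      refine ⟨m + 1, fun n => if n = m then 1 else 0, ?_, ?_, ?_, ?_⟩
      · intro n; dsimp only; split <;> norm_num
      · intro n hn; have hnm : n ≠ m := by omega
        simp [hnm]
      · rw [Finset.sum_ite_eq' (Finset.range (m+1)) m (fun _ => (1:ℝ))]
        simp
      · have : ∀ n ∈ Finset.range (m+1), (if n = m then (1:ℝ) else 0) • x n
            = (if n = m then x m else 0) := by
          intro n _
          by_cases h : n = m
          · subst h; simp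
          · simp [h]
        rw [Finset.sum_congr rfl this, Finset.sum_ite_eq' (Finset.range (m+1)) m fun _ => x m]
        simp
    · intro y₁ hy₁ y₂ hy₂ a b ha hb hab
      obtain ⟨N₁, μ₁, h₁0, h₁z, h₁s, h₁e⟩ := hy₁
      obtain ⟨N₂, μ₂, h₂0, h₂z, h₂s, h₂e⟩ := hy₂
      have hle₁ : Finset.range N₁ ⊆ Finset.range (max N₁ N₂) := by
        apply Finset.range_subset_range.2 (le_max_left _ _)
      have hle₂ : Finset.range N₂ ⊆ Finset.range (max N₁ N₂) := by
        apply Finset.range_subset_range.2 (le_max_right _ _)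
      have hz₁ : ∀ i ∈ Finset.range (max N₁ N₂), i ∉ Finset.range N₁ → μ₁ i = 0 := by
        intro i _ hi; rw [Finset.mem_range, not_lt] at hi; exact h₁z i hi
      have hz₂ : ∀ i ∈ Finset.range (max N₁ N₂), i ∉ Finset.range N₂ → μ₂ i = 0 := by
        intro i _ hi; rw [Finset.mem_range, not_lt] at hi; exact h₂z i hi
      refine ⟨max N₁ N₂, fun n => a * μ₁ n + b * μ₂ n, ?_, ?_, ?_, ?_⟩
      · intro n; exact add_nonneg (mul_nonneg ha (h₁0 n)) (mul_nonneg hb (h₂0 n))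
      · intro n hn; dsimp only
        rw [h₁z n (le_trans (le_max_left _ _) hn), h₂z n (le_trans (le_max_right _ _) hn)]
        ring
      · have e₁ : ∑ n ∈ Finset.range (max N₁ N₂), μ₁ n = 1 := by
          rw [← Finset.sum_subset hle₁ hz₁, h₁s]
        have e₂ : ∑ n ∈ Finset.range (max N₁ N₂), μ₂ n = 1 := by
          rw [← Finset.sum_subset hle₂ hz₂, h₂s]
        rw [Finset.sum_add_distrib, ← Finset.mul_sum, ← Finset.mul_sum, e₁, e₂]
        simpa using hab
      · have e₁ : ∑ n ∈ Finset.range (max N₁ N₂), μ₁ n • x n = y₁ := by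
          rw [h₁e]
          apply (Finset.sum_subset hle₁ _).symm
          intro i hmem hi; rw [Finset.mem_range, not_lt] at hi
          rw [h₁z i hi, zero_smul]
        have e₂ : ∑ n ∈ Finset.range (max N₁ N₂), μ₂ n • x n = y₂ := by
          rw [h₂e]
          apply (Finset.sum_subset hle₂ _).symm
          intro i hmem hi; rw [Finset.mem_range, not_lt] at hi
          rw [h₂z i hi, zero_smul]
        rw [← e₁, ← e₂, Finset.smul_sum, Finset.smul_sum, ← Finset.sum_add_distrib]
        apply Finset.sum_congr rfl
        intro i _; dsimp only
        rw [add_smul, smul_smul, smul_smul]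
  exact hsub hy
lemma geom_half_tsum : ∑' n : ℕ, ((2:ℝ)⁻¹)^(n+1) = 1 := by
  have h := tsum_geometric_two' 1
  rw [← h]
  apply tsum_congr
  intro n
  rw [pow_succ]
  rw [inv_pow, div_div, one_div, mul_inv]
  ring

lemma geom_half_summable : Summable (fun n : ℕ => ((2:ℝ)⁻¹)^(n+1)) := by
  have h : Summable (fun n : ℕ => ((2:ℝ)⁻¹)^n) :=
    summable_geometric_of_lt_one (by norm_num) (by norm_num)
  simpa [pow_succ] using h.mul_right 2⁻¹

lemma geom_half_partial_le (s : Finset ℕ) : ∑ n ∈ s, ((2:ℝ)⁻¹)^(n+1) ≤ 1 := by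
  rw [← geom_half_tsum]
  exact Summable.sum_le_tsum s (fun i _ => by positivity) geom_half_summable

/-- countable convex combinations stay in a closed bounded convex set -/
lemma convex_tsum_mem {K : Set X} (hconv : Convex ℝ K) (hclosed : IsClosed K)
    {C : ℝ} (hbd : ∀ u ∈ K, ‖u‖ ≤ C) (lam : ℕ → ℝ) (p : ℕ → X)
    (hlam0 : ∀ j, 0 ≤ lam j) (hlsum : Summable lam) (hlam1 : ∑' j, lam j = 1)
    (hp : ∀ j, p j ∈ K) : (∑' j, lam j • p j) ∈ K := by
  have hpsum : Summable (fun j => lam j • p j) := by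
    apply Summable.of_norm
    apply Summable.of_nonneg_of_le (fun j => norm_nonneg _) (fun j => ?_) (hlsum.mul_right C)
    rw [norm_smul]
    have h1 : ‖lam j‖ = lam j := Real.norm_of_nonneg (hlam0 j)
    rw [h1]
    exact mul_le_mul_of_nonneg_left (hbd _ (hp j)) (hlam0 j)
  set m : ℕ → ℝ := fun N => ∑ j ∈ Finset.range N, lam j with hm
  have hmt : Tendsto m atTop (𝓝 1) := by
    rw [← hlam1]; exact hlsum.hasSum.tendsto_sum_nat
  have hev : ∀ᶠ N in atTop, m N ∈ Set.Ioi (1/2 : ℝ) := hmt (Ioi_mem_nhds (by norm_num))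
  have hq : ∀ N, m N ∈ Set.Ioi (1/2:ℝ) → (m N)⁻¹ • (∑ j ∈ Finset.range N, lam j • p j) ∈ K := by
    intro N hN
    rw [Set.mem_Ioi] at hN
    have hmpos : 0 < m N := lt_trans (by norm_num) hN
    rw [Finset.smul_sum]
    have : ∀ j ∈ Finset.range N, (m N)⁻¹ • lam j • p j = ((m N)⁻¹ * lam j) • p j := by
      intro j _; rw [smul_smul]
    rw [Finset.sum_congr rfl this]
    apply hconv.sum_mem
    · intro i _; exact mul_nonneg (le_of_lt (inv_pos.2 hmpos)) (hlam0 i)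
    · rw [← Finset.mul_sum]
      have hmN : ∑ i ∈ Finset.range N, lam i = m N := rfl
      rw [hmN, inv_mul_cancel₀ (ne_of_gt hmpos)]
    · intro i _; exact hp i
  have htend : Tendsto (fun N => (m N)⁻¹ • (∑ j ∈ Finset.range N, lam j • p j)) atTop
      (𝓝 (∑' j, lam j • p j)) := by
    have h1 : Tendsto (fun N => (m N)⁻¹) atTop (𝓝 1) := by
      have := hmt.inv₀ (by norm_num)
      simpa using this
    have h2 : Tendsto (fun N => ∑ j ∈ Finset.range N, lam j • p j) atTop
        (𝓝 (∑' j, lam j • p j)) := hpsum.hasSum.tendsto_sum_nat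
    have := h1.smul h2
    simpa using this
  apply hclosed.mem_of_tendsto htend
  filter_upwards [hev] with N hN
  exact hq N hN
/-- Simons' inequality, concrete form: if all boundary functionals of a bounded
sequence tend to zero pointwise, then 0 is in the closed convex hull. -/
lemma simons_boundary (B : Set (StrongDual ℝ X)) (hB : IsBoundary B) (z : ℕ → X) (M : ℝ)
    (hz : ∀ n, ‖z n‖ ≤ M)
    (hlim : ∀ b ∈ B, Tendsto (fun n => b (z n)) atTop (𝓝 0)) :
    (0 : X) ∈ closure (convexHull ℝ (Set.range z)) := by
  have hM0 : 0 ≤ M := le_trans (norm_nonneg (z 0)) (hz 0)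
  set W : ℕ → Set X := fun n => closure (convexHull ℝ (z '' Set.Ici n)) with hWdef
  have hWconv : ∀ n, Convex ℝ (W n) := fun n => (convex_convexHull ℝ _).closure
  have hWclosed : ∀ n, IsClosed (W n) := fun n => isClosed_closure
  have hWz : ∀ {n j : ℕ}, n ≤ j → z j ∈ W n := by
    intro n j hnj
    exact subset_closure (subset_convexHull ℝ _ ⟨j, hnj, rfl⟩)
  have hWmono : ∀ {n m : ℕ}, n ≤ m → W m ⊆ W n := by
    intro n m hnm
    exact closure_mono (convexHull_mono (Set.image_mono (Set.Ici_subset_Ici.2 hnm)))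
  have hWbd : ∀ n, ∀ u ∈ W n, ‖u‖ ≤ M := by
    intro n u hu
    have h1 : convexHull ℝ (z '' Set.Ici n) ⊆ Metric.closedBall 0 M := by
      apply convexHull_min _ (convex_closedBall 0 M)
      rintro _ ⟨j, _, rfl⟩
      simpa [Metric.mem_closedBall, dist_zero_right] using hz j
    have h2 : W n ⊆ Metric.closedBall 0 M :=
      closure_minimal h1 Metric.isClosed_closedBall
    simpa [Metric.mem_closedBall, dist_zero_right] using h2 hu
  have hW0 : W 0 ⊆ closure (convexHull ℝ (Set.range z)) := by
    have : z '' Set.Ici 0 = Set.range z := by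
      ext u; constructor
      · rintro ⟨j, _, rfl⟩; exact ⟨j, rfl⟩
      · rintro ⟨j, rfl⟩; exact ⟨j, Nat.zero_le j, rfl⟩
    show closure (convexHull ℝ (z '' Set.Ici 0)) ⊆ _
    rw [this]
  -- suffices: inf of norms over W 0 is 0
  suffices hsuf : ∀ ε : ℝ, 0 < ε → ∃ u ∈ W 0, ‖u‖ < ε by
    have h0 : (0:X) ∈ W 0 := by
      rw [← (hWclosed 0).closure_eq]
      rw [Metric.mem_closure_iff]
      intro ε hε
      obtain ⟨u, hu, hun⟩ := hsuf ε hε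
      exact ⟨u, hu, by rwa [dist_zero_left]⟩
    exact hW0 h0
  intro ε hε
  -- the ε-budget sequence
  set en : ℕ → ℝ := fun n => ε/2 * ((4:ℝ)⁻¹)^(n+1) with hen
  have henpos : ∀ n, 0 < en n := fun n => by positivity
  -- the inf functional
  set θ : ℕ → X → ℝ := fun n h => sInf ((fun u => ‖h + ((2:ℝ)⁻¹)^n • u‖) '' W n) with hθ
  have hWne : ∀ n, (W n).Nonempty := fun n => ⟨z n, hWz le_rfl⟩
  have hbdd : ∀ n h, BddBelow ((fun u => ‖h + ((2:ℝ)⁻¹)^n • u‖) '' W n) := by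
    intro n h
    refine ⟨0, ?_⟩
    rintro r ⟨u, hu, rfl⟩
    positivity
  have hθle : ∀ n (h : X) u, u ∈ W n → θ n h ≤ ‖h + ((2:ℝ)⁻¹)^n • u‖ := by
    intro n h u hu
    exact csInf_le (hbdd n h) ⟨u, hu, rfl⟩
  -- choice of approximate minimizers
  have hex : ∀ n (h : X), ∃ u, u ∈ W n ∧ ‖h + ((2:ℝ)⁻¹)^n • u‖ < θ n h + en n := by
    intro n h
    have hlt : θ n h < θ n h + en n := lt_add_of_pos_right _ (henpos n)
    obtain ⟨r, ⟨u, hu, rfl⟩, hr⟩ :=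
      exists_lt_of_csInf_lt ((hWne n).image _) hlt
    exact ⟨u, hu, hr⟩
  choose pick hpickW hpickB using hex
  -- the recursively defined partial sums
  set H : ℕ → X := fun n => Nat.rec (0:X) (fun m Hm => Hm + ((2:ℝ)⁻¹)^(m+1) • pick m Hm) n
    with hHdef
  set w : ℕ → X := fun n => pick n (H n) with hwdef
  have hH0 : H 0 = 0 := rfl
  have hHsucc : ∀ n, H (n+1) = H n + ((2:ℝ)⁻¹)^(n+1) • w n := fun n => rfl
  have hwW : ∀ n, w n ∈ W n := fun n => hpickW n (H n)
  have hwnorm : ∀ n, ‖w n‖ ≤ M := fun n => hWbd n _ (hwW n)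
  -- tails
  have hsum : ∀ n, Summable (fun j => ((2:ℝ)⁻¹)^(j+1) • w (n + j)) := by
    intro n
    apply Summable.of_norm
    apply Summable.of_nonneg_of_le (fun j => norm_nonneg _) (fun j => ?_)
      (geom_half_summable.mul_right M)
    rw [norm_smul]
    have h1 : ‖((2:ℝ)⁻¹)^(j+1)‖ = ((2:ℝ)⁻¹)^(j+1) := Real.norm_of_nonneg (by positivity)
    rw [h1]
    exact mul_le_mul_of_nonneg_left (hwnorm _) (by positivity)
  set T : ℕ → X := fun n => ∑' j, ((2:ℝ)⁻¹)^(j+1) • w (n + j) with hTdef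
  have hTmem : ∀ n, T n ∈ W n := by
    intro n
    apply convex_tsum_mem (hWconv n) (hWclosed n) (hWbd n)
      _ _ (fun j => by positivity) geom_half_summable geom_half_tsum
    intro j
    exact hWmono (Nat.le_add_right n j) (hwW (n + j))
  have hTnorm : ∀ n, ‖T n‖ ≤ M := fun n => hWbd n _ (hTmem n)
  have hTsplit : ∀ n, T n = ((2:ℝ)⁻¹) • w n + (2:ℝ)⁻¹ • T (n+1) := by
    intro n
    have h1 : T n = ((2:ℝ)⁻¹)^(0+1) • w (n + 0)
        + ∑' j, ((2:ℝ)⁻¹)^((j+1)+1) • w (n + (j+1)) := Summable.tsum_eq_zero_add (hsum n)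
    have h2 : ∀ j : ℕ, ((2:ℝ)⁻¹)^((j+1)+1) • w (n + (j+1))
        = (2:ℝ)⁻¹ • (((2:ℝ)⁻¹)^(j+1) • w ((n+1) + j)) := by
      intro j
      have hj : n + (j+1) = (n+1) + j := by omega
      rw [hj, smul_smul, ← pow_succ']
    have h3 : ∑' j, ((2:ℝ)⁻¹)^((j+1)+1) • w (n + (j+1)) = (2:ℝ)⁻¹ • T (n+1) := by
      rw [tsum_congr h2, Summable.tsum_const_smul _ (hsum (n+1))]
    rw [h1, h3]
    norm_num
  have hHT : ∀ n, H n + ((2:ℝ)⁻¹)^n • T n = T 0 := by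
    intro n
    induction n with
    | zero => rw [hH0]; simp
    | succ n ih =>
      rw [hHsucc n, ← ih, hTsplit n]
      rw [smul_add, smul_smul, smul_smul, ← pow_succ]
      abel
  -- the boundary functional attaining the norm of T 0
  obtain ⟨b, hbB, hbT0⟩ := hB.2 (T 0)
  have hb1 : ‖b‖ = 1 := hB.1 b hbB
  have hbw_le : ∀ n, b (w n) ≤ M := fun n => le_trans (dual_apply_le hb1 _) (hwnorm n)
  have hbddA : ∀ n, BddAbove (Set.range (fun j => b (w (n + j)))) := by
    intro n
    refine ⟨M, ?_⟩
    rintro r ⟨j, rfl⟩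
    exact hbw_le (n + j)
  set s : ℕ → ℝ := fun n => ⨆ j, b (w (n + j)) with hsdef
  have hbsum : ∀ n, Summable (fun j => ((2:ℝ)⁻¹)^(j+1) * b (w (n + j))) := by
    intro n
    apply Summable.of_norm
    apply Summable.of_nonneg_of_le (fun j => norm_nonneg _) (fun j => ?_)
      (geom_half_summable.mul_right M)
    rw [Real.norm_eq_abs, abs_mul]
    have h1 : |((2:ℝ)⁻¹)^(j+1)| = ((2:ℝ)⁻¹)^(j+1) := abs_of_nonneg (by positivity)
    rw [h1]
    apply mul_le_mul_of_nonneg_left _ (by positivity)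
    exact le_trans (dual_abs_apply_le hb1 _) (hwnorm _)
  have hbT : ∀ n, b (T n) = ∑' j, ((2:ℝ)⁻¹)^(j+1) * b (w (n + j)) := by
    intro n
    rw [hTdef]
    rw [ContinuousLinearMap.map_tsum b (hsum n)]
    apply tsum_congr
    intro j
    rw [map_smul]
    rfl
  have hbTle : ∀ n, b (T n) ≤ s n := by
    intro n
    rw [hbT n]
    have h1 : ∀ j, ((2:ℝ)⁻¹)^(j+1) * b (w (n + j)) ≤ ((2:ℝ)⁻¹)^(j+1) * s n := by
      intro j
      exact mul_le_mul_of_nonneg_left (le_ciSup (hbddA n) j) (by positivity)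
    calc ∑' j, ((2:ℝ)⁻¹)^(j+1) * b (w (n + j))
        ≤ ∑' j, ((2:ℝ)⁻¹)^(j+1) * s n :=
          Summable.tsum_le_tsum h1 (hbsum n) (geom_half_summable.mul_right _)
      _ = (∑' j : ℕ, ((2:ℝ)⁻¹)^(j+1)) * s n := tsum_mul_right
      _ = s n := by rw [geom_half_tsum, one_mul]
  -- main estimate : b (w n) ≤ s (n+1) + δ n  where δ n = 2^(n+1) * en n
  have hkey : ∀ n, b (w n) ≤ s (n+1) + (2:ℝ)^(n+1) * en n := by
    intro n
    have e1 : b (H n) + ((2:ℝ)⁻¹)^n * b (w n) ≤ ‖H n + ((2:ℝ)⁻¹)^n • w n‖ := by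
      have h1 : b (H n + ((2:ℝ)⁻¹)^n • w n) = b (H n) + ((2:ℝ)⁻¹)^n * b (w n) := by
        rw [map_add, map_smul]; rfl
      rw [← h1]
      exact dual_apply_le hb1 _
    have e2 : ‖H n + ((2:ℝ)⁻¹)^n • w n‖ < θ n (H n) + en n := hpickB n (H n)
    have e3 : θ n (H n) ≤ ‖T 0‖ := by
      have := hθle n (H n) (T n) (hTmem n)
      rwa [hHT n] at this
    have e4 : ‖T 0‖ = b (H n) + ((2:ℝ)⁻¹)^n * b (T n) := by
      rw [← hbT0, ← hHT n, map_add, map_smul]; rfl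
    have e5 : b (T n) = (2:ℝ)⁻¹ * b (w n) + (2:ℝ)⁻¹ * b (T (n+1)) := by
      rw [hTsplit n, map_add, map_smul, map_smul]; rfl
    -- combine: 2⁻¹^n * b w n < 2⁻¹^n * b T n + en n
    have e6 : ((2:ℝ)⁻¹)^n * b (w n) < ((2:ℝ)⁻¹)^n * b (T n) + en n := by
      have := lt_of_le_of_lt e1 (lt_of_lt_of_le e2 (add_le_add_left e3 _))
      rw [e4] at this
      linarith
    have e7 : ((2:ℝ)⁻¹)^(n+1) * b (w n) < ((2:ℝ)⁻¹)^(n+1) * b (T (n+1)) + en n := by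
      rw [e5] at e6
      have hpow : ((2:ℝ)⁻¹)^(n+1) = ((2:ℝ)⁻¹)^n * 2⁻¹ := pow_succ _ _
      rw [hpow]
      nlinarith [pow_pos (by norm_num : (0:ℝ) < 2⁻¹) n]
    have hmul : ((2:ℝ)⁻¹)^(n+1) * (2:ℝ)^(n+1) = 1 := by
      rw [← mul_pow]; norm_num
    have hppos : (0:ℝ) < (2:ℝ)^(n+1) := by positivity
    have e8 : b (w n) < b (T (n+1)) + (2:ℝ)^(n+1) * en n := by
      have := mul_lt_mul_of_pos_right e7 hppos
      calc b (w n) = ((2:ℝ)⁻¹)^(n+1) * b (w n) * (2:ℝ)^(n+1) := by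
            linear_combination (-(b (w n))) * hmul
          _ < (((2:ℝ)⁻¹)^(n+1) * b (T (n+1)) + en n) * (2:ℝ)^(n+1) := this
          _ = b (T (n+1)) + (2:ℝ)^(n+1) * en n := by
            linear_combination (b (T (n+1))) * hmul
    exact le_of_lt (lt_of_lt_of_le e8 (add_le_add_left (hbTle (n+1)) _))
  -- s recursion
  have hsrec : ∀ n, s n ≤ s (n+1) + (2:ℝ)^(n+1) * en n := by
    intro n
    apply ciSup_le
    intro j
    cases j with
    | zero => simpa using hkey n
    | succ j =>
      have h1 : n + (j+1) = (n+1) + j := by omega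
      have h2 : b (w (n + (j+1))) ≤ s (n+1) := by
        rw [h1]; exact le_ciSup (hbddA (n+1)) j
      have h3 : 0 ≤ (2:ℝ)^(n+1) * en n := le_of_lt (by positivity)
      linarith
  -- δ partial sums bounded by ε/2
  have hdelta : ∀ n, ∑ i ∈ Finset.range n, (2:ℝ)^(i+1) * en i ≤ ε/2 := by
    intro n
    have h1 : ∀ i, (2:ℝ)^(i+1) * en i = ε/2 * ((2:ℝ)⁻¹)^(i+1) := by
      intro i
      rw [hen]
      have : (2:ℝ)^(i+1) * ((4:ℝ)⁻¹)^(i+1) = ((2:ℝ)⁻¹)^(i+1) := by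
        rw [← mul_pow]; norm_num
      calc (2:ℝ)^(i+1) * (ε/2 * ((4:ℝ)⁻¹)^(i+1))
          = ε/2 * ((2:ℝ)^(i+1) * ((4:ℝ)⁻¹)^(i+1)) := by ring
        _ = ε/2 * ((2:ℝ)⁻¹)^(i+1) := by rw [this]
    rw [Finset.sum_congr rfl (fun i _ => h1 i), ← Finset.mul_sum]
    have h2 := geom_half_partial_le (Finset.range n)
    nlinarith
  -- lower bound chain: θ 0 0 ≤ s n + ε/2
  have hs0 : θ 0 (H 0) ≤ s 0 := by
    have e3 : θ 0 (H 0) ≤ ‖T 0‖ := by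
      have := hθle 0 (H 0) (T 0) (hTmem 0)
      rwa [hHT 0] at this
    calc θ 0 (H 0) ≤ ‖T 0‖ := e3
      _ = b (T 0) := hbT0.symm
      _ ≤ s 0 := hbTle 0
  have hslow : ∀ n, s 0 ≤ s n + ∑ i ∈ Finset.range n, (2:ℝ)^(i+1) * en i := by
    intro n
    induction n with
    | zero => simp
    | succ n ih =>
      rw [Finset.sum_range_succ]
      have := hsrec n
      linarith
  -- use pointwise convergence to make s N small
  have hbz : Tendsto (fun n => b (z n)) atTop (𝓝 0) := hlim b hbB
  have hev : ∀ᶠ n in atTop, b (z n) < ε/4 := by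
    have := hbz (Metric.ball_mem_nhds (0:ℝ) (by positivity : (0:ℝ) < ε/4))
    filter_upwards [this] with n hn
    rw [Set.mem_preimage, Metric.mem_ball, Real.dist_eq, sub_zero] at hn
    exact lt_of_le_of_lt (le_abs_self _) hn
  obtain ⟨N, hN⟩ := eventually_atTop.1 hev
  have hWNle : ∀ u ∈ W N, b u ≤ ε/4 := by
    intro u hu
    have hconvset : Convex ℝ {v : X | b v ≤ ε/4} := by
      apply convex_halfSpace_le
      exact ⟨fun x y => map_add b x y, fun c x => map_smul b c x⟩
    have hclosedset : IsClosed {v : X | b v ≤ ε/4} :=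
      isClosed_le b.continuous continuous_const
    have h1 : convexHull ℝ (z '' Set.Ici N) ⊆ {v : X | b v ≤ ε/4} := by
      apply convexHull_min _ hconvset
      rintro _ ⟨j, hj, rfl⟩
      exact le_of_lt (hN j hj)
    have h2 : W N ⊆ {v : X | b v ≤ ε/4} := closure_minimal h1 hclosedset
    exact h2 hu
  have hsN : s N ≤ ε/4 := by
    apply ciSup_le
    intro j
    exact hWNle _ (hWmono (Nat.le_add_right N j) (hwW (N + j)))
  -- conclude : θ 0 0 < ε
  have hfinal : θ 0 (H 0) < ε := by
    have h1 := hslow N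
    have h2 := hdelta N
    have : θ 0 (H 0) ≤ ε/4 + ε/2 := by linarith
    linarith
  obtain ⟨r, ⟨u, hu, rfl⟩, hr⟩ := exists_lt_of_csInf_lt ((hWne 0).image _) hfinal
  refine ⟨u, hu, ?_⟩
  rw [hH0] at hr
  simpa using hr
/-- The key lemma: under the diagonal structure, the sigma-closure of the convex
hull is contained in the norm closure. -/
lemma main_key (B : Set (StrongDual ℝ X)) (hB : IsBoundary B)
    (e : ℕ → StrongDual ℝ X) (heB : ∀ k, e k ∈ B)
    (x : ℕ → X) (M : ℝ) (hxM : ∀ n, ‖x n‖ ≤ M)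
    (ξ : ℕ → ℝ) (hconv : ∀ k, Tendsto (fun n => e k (x n)) atTop (𝓝 (ξ k)))
    (hnorm : ∀ u : X, ∀ δ : ℝ, 0 < δ → ∃ k, ‖u‖ - δ ≤ e k u)
    (hV : ∀ v : X, (∀ k, e k v = ξ k) → v ∈ closure (convexHull ℝ (Set.range x))) :
    sigmaClosure B (convexHull ℝ (Set.range x)) ⊆ closure (convexHull ℝ (Set.range x)) := by
  classical
  intro x₀ hx₀
  set K : Set X := closure (convexHull ℝ (Set.range x)) with hKdef
  have hKconv : Convex ℝ K := (convex_convexHull ℝ _).closure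
  have hKclosed : IsClosed K := isClosed_closure
  have hKbd : ∀ u ∈ K, ‖u‖ ≤ M := by
    intro u hu
    have h1 : convexHull ℝ (Set.range x) ⊆ Metric.closedBall 0 M := by
      apply convexHull_min _ (convex_closedBall 0 M)
      rintro _ ⟨j, rfl⟩
      simpa [Metric.mem_closedBall, dist_zero_right] using hxM j
    have h2 : K ⊆ Metric.closedBall 0 M := closure_minimal h1 Metric.isClosed_closedBall
    simpa [Metric.mem_closedBall, dist_zero_right] using h2 hu
  have hxK : ∀ n, x n ∈ K := fun n => subset_closure (subset_convexHull ℝ _ ⟨n, rfl⟩)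
  have hzero : ∀ u : X, (∀ k, e k u = 0) → u = 0 := by
    intro u hu
    have h1 : ∀ δ : ℝ, 0 < δ → ‖u‖ ≤ δ := by
      intro δ hδ
      obtain ⟨k, hk⟩ := hnorm u δ hδ
      rw [hu k] at hk
      linarith
    have h2 : ‖u‖ ≤ 0 := le_of_forall_pos_le_add (by intro ε hε; simpa using h1 ε hε)
    exact norm_le_zero_iff.1 h2
  -- step a : the approximating sequence y
  have hyex : ∀ j : ℕ, ∃ y ∈ convexHull ℝ (Set.range x),
      ∀ k, k ≤ j → |e k x₀ - e k y| < 1/(j+1) := by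
    intro j
    have hpos : (0:ℝ) < 1/(j+1) := by positivity
    obtain ⟨y, hy, hfa⟩ := hx₀ (1/(j+1)) hpos ((Finset.range (j+1)).image e) (by
      intro f hf
      simp only [Finset.coe_image, Set.mem_image, Finset.mem_coe, Finset.mem_range] at hf
      obtain ⟨k, _, rfl⟩ := hf
      exact heB k)
    refine ⟨y, hy, fun k hk => ?_⟩
    exact hfa (e k) (Finset.mem_image_of_mem e (Finset.mem_range.2 (Nat.lt_succ_of_le hk)))
  choose y hyK hyapp using hyex
  have hye : ∀ k, Tendsto (fun j => e k (y j)) atTop (𝓝 (e k x₀)) := by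
    intro k
    rw [Metric.tendsto_atTop]
    intro η hη
    obtain ⟨J₀, hJ₀⟩ := exists_nat_one_div_lt hη
    refine ⟨max k J₀, fun j hj => ?_⟩
    have h1 : k ≤ j := le_trans (le_max_left _ _) hj
    have h2 : (J₀ : ℝ) + 1 ≤ (j : ℝ) + 1 := by
      have := le_trans (le_max_right k J₀) hj
      exact_mod_cast Nat.succ_le_succ this
    have h3 := hyapp j k h1
    rw [Real.dist_eq, abs_sub_comm]
    calc |e k x₀ - e k (y j)| < 1/(j+1) := h3
      _ ≤ 1/(J₀+1) := by
        apply one_div_le_one_div_of_le (by positivity) h2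
      _ < η := hJ₀
  -- step b : the coefficients c
  set c : ℕ → ℕ → ℝ := fun k n => e k (x n) - ξ k with hcdef
  have hc0 : ∀ k, Tendsto (c k) atTop (𝓝 0) := by
    intro k
    have := (hconv k).sub_const (ξ k)
    simpa using this
  have hcbd : ∀ k n, |c k n| ≤ M + |ξ k| := by
    intro k n
    have h1 : |e k (x n)| ≤ M :=
      le_trans (dual_abs_apply_le (hB.1 _ (heB k)) _) (hxM n)
    calc |c k n| ≤ |e k (x n)| + |ξ k| := abs_sub _ _
      _ ≤ M + |ξ k| := by linarith
  -- step c : the compact coefficient space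
  set Mset : Set (ℕ → ℝ) := {ν | (∀ n, 0 ≤ ν n ∧ ν n ≤ 1) ∧
      ∀ N, ∑ n ∈ Finset.range N, ν n ≤ 1} with hMsetdef
  have hMclosed : IsClosed Mset := by
    have h1 : Mset = (⋂ n, {ν : ℕ → ℝ | 0 ≤ ν n} ∩ {ν | ν n ≤ 1}) ∩
        (⋂ N, {ν : ℕ → ℝ | ∑ n ∈ Finset.range N, ν n ≤ 1}) := by
      ext ν
      simp only [hMsetdef, Set.mem_setOf_eq, Set.mem_inter_iff, Set.mem_iInter]
    rw [h1]
    apply IsClosed.inter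
    · apply isClosed_iInter
      intro n
      exact (isClosed_le continuous_const (continuous_apply n)).inter
        (isClosed_le (continuous_apply n) continuous_const)
    · apply isClosed_iInter
      intro N
      exact isClosed_le (continuous_finset_sum _ (fun n _ => continuous_apply n))
        continuous_const
  have hMcomp : IsCompact Mset := by
    apply IsCompact.of_isClosed_subset (isCompact_univ_pi (fun _ : ℕ => isCompact_Icc))
      hMclosed
    intro ν hν
    rw [Set.mem_univ_pi]
    intro n
    exact ⟨(hν.1 n).1, (hν.1 n).2⟩
  have hνsummable : ∀ ν ∈ Mset, Summable ν := by
    intro ν hν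
    exact summable_of_sum_range_le (fun n => (hν.1 n).1) hν.2
  have hνtsum_le : ∀ ν ∈ Mset, ∑' n, ν n ≤ 1 := by
    intro ν hν
    exact Summable.tsum_le_of_sum_range_le (hνsummable ν hν) hν.2
  -- step d : the map G and its continuity
  set G : (ℕ → ℝ) → ℕ → ℝ := fun ν k => ξ k + ∑' n, ν n * c k n with hGdef
  have hGsummand : ∀ ν ∈ Mset, ∀ k, Summable (fun n => ν n * c k n) := by
    intro ν hν k
    apply Summable.of_norm
    apply Summable.of_nonneg_of_le (fun n => norm_nonneg _) (fun n => ?_)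
      ((hνsummable ν hν).mul_right (M + |ξ k|))
    rw [Real.norm_eq_abs, abs_mul, abs_of_nonneg (hν.1 n).1]
    exact mul_le_mul_of_nonneg_left (hcbd k n) (hν.1 n).1
  have hGcont : ∀ k, ContinuousOn (fun ν => G ν k) Mset := by
    intro k
    have huc : TendstoUniformlyOn
        (fun N ν => ξ k + ∑ n ∈ Finset.range N, ν n * c k n)
        (fun ν => G ν k) atTop Mset := by
      rw [Metric.tendstoUniformlyOn_iff]
      intro η hη
      obtain ⟨N₀, hN₀⟩ := (Metric.tendsto_atTop.1 (hc0 k)) (η/2) (by positivity)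
      rw [eventually_atTop]
      refine ⟨N₀, fun N hN ν hν => ?_⟩
      have hsm := hGsummand ν hν k
      have htail : G ν k - (ξ k + ∑ n ∈ Finset.range N, ν n * c k n)
          = ∑' n, ν (n + N) * c k (n + N) := by
        rw [hGdef]
        have := Summable.sum_add_tsum_nat_add (f := fun n => ν n * c k n) N hsm
        dsimp only
        linarith [this]
      have htailsummable : Summable (fun n => ν (n + N) * c k (n + N)) :=
        (summable_nat_add_iff N).2 hsm
      have hterm : ∀ n : ℕ, |ν (n + N) * c k (n + N)| ≤ ν (n + N) * (η/2) := by
        intro n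
        rw [abs_mul, abs_of_nonneg (hν.1 _).1]
        apply mul_le_mul_of_nonneg_left _ (hν.1 _).1
        have := hN₀ (n + N) (le_trans hN (Nat.le_add_left N n))
        rw [Real.dist_eq, sub_zero] at this
        exact le_of_lt this
      have hνtail : Summable (fun n => ν (n + N)) :=
        (summable_nat_add_iff N).2 (hνsummable ν hν)
      have hνtail_le : ∑' n, ν (n + N) ≤ 1 := by
        have h1 := Summable.sum_add_tsum_nat_add (f := ν) N (hνsummable ν hν)
        have h2 : 0 ≤ ∑ n ∈ Finset.range N, ν n :=
          Finset.sum_nonneg (fun n _ => (hν.1 n).1)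
        have h3 := hνtsum_le ν hν
        linarith
      have habsle : ∀ n : ℕ, |ν (n + N) * c k (n + N)| ≤ ν (n + N) * (η/2) := hterm
      have habs : |∑' n, ν (n + N) * c k (n + N)| ≤ η/2 := by
        calc |∑' n, ν (n + N) * c k (n + N)| ≤ ∑' n, |ν (n + N) * c k (n + N)| := by
              have h := norm_tsum_le_tsum_norm (f := fun n => ν (n + N) * c k (n + N))
                htailsummable.abs
              have heq : ∀ n : ℕ, ‖ν (n + N) * c k (n + N)‖ = |ν (n + N) * c k (n + N)| :=
                fun n => rfl
              calc |∑' n, ν (n + N) * c k (n + N)|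
                  = ‖∑' n, ν (n + N) * c k (n + N)‖ := rfl
                _ ≤ ∑' n, ‖ν (n + N) * c k (n + N)‖ := h
                _ = ∑' n, |ν (n + N) * c k (n + N)| := tsum_congr heq
          _ ≤ ∑' n, ν (n + N) * (η/2) :=
              Summable.tsum_le_tsum habsle htailsummable.abs (hνtail.mul_right _)
          _ = (∑' n, ν (n + N)) * (η/2) := tsum_mul_right
          _ ≤ 1 * (η/2) := by
              apply mul_le_mul_of_nonneg_right hνtail_le (by positivity)
          _ = η/2 := one_mul _
      rw [Real.dist_eq]
      have hfin : |G ν k - (ξ k + ∑ n ∈ Finset.range N, ν n * c k n)| ≤ η / 2 := by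
        rw [htail]; exact habs
      linarith
    apply huc.continuousOn
    apply Frequently.of_forall
    intro N
    apply Continuous.continuousOn
    exact continuous_const.add (continuous_finset_sum _
      (fun n _ => (continuous_apply n).mul continuous_const))
  have hGconton : ContinuousOn G Mset := by
    apply continuousOn_pi.2
    intro k
    exact hGcont k
  -- step e : the image is compact, and contains the target point
  set P : Set (ℕ → ℝ) := G '' Mset with hPdef
  have hPcomp : IsCompact P := hMcomp.image_of_continuousOn hGconton
  have hPclosed : IsClosed P := hPcomp.isClosed
  set pstar : ℕ → ℝ := fun k => e k x₀ with hpstar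
  -- the ν's coming from the y j
  have hydata : ∀ j : ℕ, ∃ ν ∈ Mset, G ν = fun k => e k (y j) := by
    intro j
    obtain ⟨N, μ, hμ0, hμz, hμs, hμe⟩ := repr_convexHull_range x (hyK j)
    have hμ1 : ∀ n, μ n ≤ 1 := by
      intro n
      by_cases hn : n < N
      · calc μ n ≤ ∑ m ∈ Finset.range N, μ m :=
            Finset.single_le_sum (fun m _ => hμ0 m) (Finset.mem_range.2 hn)
          _ = 1 := hμs
      · rw [hμz n (by omega)]; norm_num
    have hμM : μ ∈ Mset := by
      constructor
      · exact fun n => ⟨hμ0 n, hμ1 n⟩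
      · intro N'
        calc ∑ n ∈ Finset.range N', μ n ≤ ∑ n ∈ Finset.range (max N' N), μ n := by
              apply Finset.sum_le_sum_of_subset_of_nonneg
                (Finset.range_subset_range.2 (le_max_left _ _))
              intro i _ _; exact hμ0 i
          _ = ∑ n ∈ Finset.range N, μ n := by
              apply (Finset.sum_subset (Finset.range_subset_range.2 (le_max_right _ _)) _).symm
              intro i _ hi
              rw [Finset.mem_range, not_lt] at hi
              exact hμz i hi
          _ = 1 := hμs
    refine ⟨μ, hμM, ?_⟩
    funext k
    have hsupp : ∀ n ∉ Finset.range N, μ n * c k n = 0 := by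
      intro n hn
      rw [Finset.mem_range, not_lt] at hn
      rw [hμz n hn, zero_mul]
    have h1 : ∑' n, μ n * c k n = ∑ n ∈ Finset.range N, μ n * c k n :=
      tsum_eq_sum hsupp
    have h2 : e k (y j) = ∑ n ∈ Finset.range N, μ n * e k (x n) := by
      rw [hμe, map_sum]
      apply Finset.sum_congr rfl
      intro n _
      rw [map_smul]
      rfl
    have h3 : ∑ n ∈ Finset.range N, μ n * c k n
        = ∑ n ∈ Finset.range N, μ n * e k (x n) - (∑ n ∈ Finset.range N, μ n) * ξ k := by
      rw [Finset.sum_mul, ← Finset.sum_sub_distrib]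
      apply Finset.sum_congr rfl
      intro n _
      rw [hcdef]
      ring
    show ξ k + ∑' n, μ n * c k n = e k (y j)
    rw [h1, h3, hμs, h2]
    ring
  choose νs hνsM hνsG using hydata
  have hpstarP : pstar ∈ P := by
    have htd : Tendsto (fun j => G (νs j)) atTop (𝓝 pstar) := by
      rw [tendsto_pi_nhds]
      intro k
      have h1 : (fun j => G (νs j) k) = fun j => e k (y j) := by
        funext j
        rw [hνsG j]
      rw [h1]
      exact hye k
    exact hPclosed.mem_of_tendsto htd
      (Eventually.of_forall fun j => Set.mem_image_of_mem G (hνsM j))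
  obtain ⟨ν, hνM, hGν⟩ := hpstarP
  -- step f : the representation
  have hkeyk : ∀ k, e k x₀ = ξ k + ∑' n, ν n * c k n := by
    intro k
    have := congrFun hGν k
    exact this.symm
  set sν : ℝ := ∑' n, ν n with hsν
  have hs0 : 0 ≤ sν := tsum_nonneg (fun n => (hνM.1 n).1)
  have hs1 : sν ≤ 1 := hνtsum_le ν hνM
  set t : ℝ := 1 - sν with ht
  have ht0 : 0 ≤ t := by rw [ht]; linarith
  have hxsum : Summable (fun n => ν n • x n) := by
    apply Summable.of_norm
    apply Summable.of_nonneg_of_le (fun n => norm_nonneg _) (fun n => ?_)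
      ((hνsummable ν hνM).mul_right M)
    rw [norm_smul, Real.norm_of_nonneg (hνM.1 n).1]
    exact mul_le_mul_of_nonneg_left (hxM n) (hνM.1 n).1
  set u : X := ∑' n, ν n • x n with hu
  have heu : ∀ k, e k u = ∑' n, ν n * e k (x n) := by
    intro k
    rw [hu, ContinuousLinearMap.map_tsum _ hxsum]
    apply tsum_congr
    intro n
    rw [map_smul]
    rfl
  have hsummand1 : ∀ k, Summable (fun n => ν n * e k (x n)) := by
    intro k
    apply Summable.of_norm
    apply Summable.of_nonneg_of_le (fun n => norm_nonneg _) (fun n => ?_)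
      ((hνsummable ν hνM).mul_right M)
    rw [Real.norm_eq_abs, abs_mul, abs_of_nonneg (hνM.1 n).1]
    apply mul_le_mul_of_nonneg_left _ (hνM.1 n).1
    exact le_trans (dual_abs_apply_le (hB.1 _ (heB k)) _) (hxM n)
  have hsplit : ∀ k, ∑' n, ν n * c k n = (∑' n, ν n * e k (x n)) - sν * ξ k := by
    intro k
    have h1 : ∀ n, ν n * c k n = ν n * e k (x n) - ν n * ξ k := by
      intro n; rw [hcdef]; ring
    rw [tsum_congr h1, Summable.tsum_sub (hsummand1 k) ((hνsummable ν hνM).mul_right (ξ k))]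
    rw [tsum_mul_right]
  have hfinalk : ∀ k, e k x₀ = e k u + t * ξ k := by
    intro k
    rw [hkeyk k, hsplit k, heu k, ht]
    ring
  -- step g : conclude
  by_cases htz : t = 0
  · -- x₀ = u and u ∈ K
    have hs1' : sν = 1 := by rw [ht] at htz; linarith
    have hx₀u : x₀ = u := by
      have h1 : ∀ k, e k (x₀ - u) = 0 := by
        intro k
        rw [map_sub, hfinalk k, htz]
        ring
      have := hzero _ h1
      exact sub_eq_zero.1 this
    rw [hx₀u]
    exact convex_tsum_mem hKconv hKclosed hKbd ν x (fun n => (hνM.1 n).1)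
      (hνsummable ν hνM) hs1' hxK
  · have htpos : 0 < t := lt_of_le_of_ne ht0 (Ne.symm htz)
    set v : X := t⁻¹ • (x₀ - u) with hv
    have hrv : ∀ k, e k v = ξ k := by
      intro k
      rw [hv, map_smul]
      have h1 : e k (x₀ - u) = t * ξ k := by
        rw [map_sub, hfinalk k]; ring
      rw [smul_eq_mul, h1]
      field_simp
    have hvK : v ∈ K := hV v hrv
    have hx₀eq : x₀ = t • v + u := by
      rw [hv, smul_inv_smul₀ htz]
      abel
    -- x₀ as a countable convex combination of v and the x n
    set lam : ℕ → ℝ := fun n => Nat.rec t (fun m _ => ν m) n with hlam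
    set p : ℕ → X := fun n => Nat.rec v (fun m _ => x m) n with hp
    have hlam0' : lam 0 = t := rfl
    have hlamS : ∀ n, lam (n+1) = ν n := fun n => rfl
    have hp0 : p 0 = v := rfl
    have hpS : ∀ n, p (n+1) = x n := fun n => rfl
    have hlamsum : Summable lam := by
      rw [← summable_nat_add_iff 1]
      exact hνsummable ν hνM
    have hlamtsum : ∑' n, lam n = 1 := by
      rw [Summable.tsum_eq_zero_add hlamsum]
      rw [hlam0']
      have : ∑' n, lam (n + 1) = sν := by
        rw [hsν]
      rw [this, ht]
      ring
    have hlnn : ∀ n, 0 ≤ lam n := by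
      intro n
      cases n with
      | zero => exact ht0
      | succ m => exact (hνM.1 m).1
    have hpK : ∀ n, p n ∈ K := by
      intro n
      cases n with
      | zero => exact hvK
      | succ m => exact hxK m
    have hlampsum : Summable (fun n => lam n • p n) := by
      rw [← summable_nat_add_iff 1]
      have : (fun n => lam (n + 1) • p (n + 1)) = fun n => ν n • x n := by
        funext n; rfl
      rw [this]
      exact hxsum
    have hx₀tsum : x₀ = ∑' n, lam n • p n := by
      rw [Summable.tsum_eq_zero_add hlampsum]
      have h1 : ∑' n, lam (n + 1) • p (n + 1) = u := by
        rw [hu]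
      rw [h1, hlam0', hp0, hx₀eq]
    rw [hx₀tsum]
    exact convex_tsum_mem hKconv hKclosed hKbd lam p hlnn hlamsum hlamtsum hpK

theorem moors_wstar_separable (B : Set (StrongDual ℝ X)) (hB : IsBoundary B)
    (hsep : WeakStarSeparable B) (A : Set X) (hA : Bornology.IsBounded A)
    (hinf : A.Infinite) :
    ∃ F ⊆ A, F.Countable ∧ F.Infinite ∧
      closure (convexHull ℝ F) = sigmaClosure B (convexHull ℝ F) := by
  classical
  obtain ⟨M, hM⟩ := hA.exists_norm_le
  obtain ⟨D, hDB, hDcnt, hDdense⟩ := hsep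
  -- B and D are nonempty
  have hBne : B.Nonempty := by
    obtain ⟨a₁, ha₁, a₂, ha₂, hne⟩ := hinf.nontrivial
    obtain ⟨f, hf, _⟩ := hB.2 (a₁ - a₂)
    exact ⟨f, hf⟩
  have hDne : D.Nonempty := by
    by_contra h
    rw [Set.not_nonempty_iff_eq_empty] at h
    obtain ⟨f, hf⟩ := hBne
    obtain ⟨ψ, hψ, _⟩ := hDdense hf 1 one_pos ∅
    rw [h] at hψ
    exact hψ
  obtain ⟨d', hdD⟩ := hDcnt.exists_eq_range hDne
  set d : ℕ → StrongDual ℝ X := d' with hd'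
  have hdB : ∀ k, d k ∈ B := by
    intro k
    apply hDB
    rw [hdD]
    exact ⟨k, rfl⟩
  -- the injective sequence in A
  set a : ℕ → X := fun n => ((hinf.natEmbedding) n : X) with ha
  have haA : ∀ n, a n ∈ A := fun n => ((hinf.natEmbedding) n).2
  have hainj : Function.Injective a := by
    intro m n h
    have := (hinf.natEmbedding).injective (Subtype.ext h)
    exact this
  have haM : ∀ n, ‖a n‖ ≤ M := fun n => hM _ (haA n)
  -- norming property of d
  have hdnorm : ∀ (u : X) (δ : ℝ), 0 < δ → ∃ k, ‖u‖ - δ ≤ d k u := by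
    intro u δ hδ
    obtain ⟨f, hfB, hfu⟩ := hB.2 u
    obtain ⟨ψ, hψD, hψc⟩ := hDdense hfB δ hδ {u}
    have h1 : |f u - ψ u| < δ := hψc u (Finset.mem_singleton_self u)
    have h2 : ψ ∈ Set.range d' := by rw [← hdD]; exact hψD
    obtain ⟨k, hk⟩ := h2
    refine ⟨k, ?_⟩
    have h3 : f u - ψ u < δ := lt_of_le_of_lt (le_abs_self _) h1
    have h4 : d k u = ψ u := by rw [hd', hk]
    rw [h4, ← hfu]
    linarith
  have hduniq : ∀ u1 u2 : X, (∀ k, d k u1 = d k u2) → u1 = u2 := by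
    intro u1 u2 h
    have h1 : ∀ δ : ℝ, 0 < δ → ‖u1 - u2‖ ≤ δ := by
      intro δ hδ
      obtain ⟨k, hk⟩ := hdnorm (u1 - u2) δ hδ
      rw [map_sub, h k, sub_self] at hk
      linarith
    have h2 : ‖u1 - u2‖ ≤ 0 := le_of_forall_pos_le_add (by intro ε hε; simpa using h1 ε hε)
    exact sub_eq_zero.1 (norm_le_zero_iff.1 h2)
  -- diagonal subsequence
  set Φ : ℕ → ℕ → ℝ := fun n k => d k (a n) with hΦ
  have hΦmem : ∀ n, Φ n ∈ Set.pi Set.univ (fun _ : ℕ => Set.Icc (-M) M) := by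
    intro n
    rw [Set.mem_univ_pi]
    intro k
    have h1 : |d k (a n)| ≤ M :=
      le_trans (dual_abs_apply_le (hB.1 _ (hdB k)) _) (haM n)
    exact abs_le.1 h1
  obtain ⟨ξ₀, hξmem, φ, hφmono, hφtend⟩ :=
    (isCompact_univ_pi (fun _ : ℕ => isCompact_Icc)).tendsto_subseq hΦmem
  set x0 : ℕ → X := fun n => a (φ n) with hx0
  have hx0inj : Function.Injective x0 := hainj.comp hφmono.injective
  have hx0A : ∀ n, x0 n ∈ A := fun n => haA (φ n)
  have hx0conv : ∀ k, Tendsto (fun n => d k (x0 n)) atTop (𝓝 (ξ₀ k)) := by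
    intro k
    have h1 := hφtend
    rw [tendsto_pi_nhds] at h1
    exact h1 k
  -- the common finishing move
  have finish : ∀ (e : ℕ → StrongDual ℝ X) (xs : ℕ → X) (ξ : ℕ → ℝ),
      (∀ k, e k ∈ B) → Function.Injective xs → (∀ n, xs n ∈ A) →
      (∀ k, Tendsto (fun n => e k (xs n)) atTop (𝓝 (ξ k))) →
      (∀ (u : X) (δ : ℝ), 0 < δ → ∃ k, ‖u‖ - δ ≤ e k u) →
      (∀ v : X, (∀ k, e k v = ξ k) → v ∈ closure (convexHull ℝ (Set.range xs))) →
      ∃ F ⊆ A, F.Countable ∧ F.Infinite ∧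
        closure (convexHull ℝ F) = sigmaClosure B (convexHull ℝ F) := by
    intro e xs ξ heB hinj hsub hconv hnorm hV
    refine ⟨Set.range xs, ?_, Set.countable_range _,
      Set.infinite_range_of_injective hinj, ?_⟩
    · rintro _ ⟨n, rfl⟩; exact hsub n
    · apply Set.Subset.antisymm
      · exact closure_subset_sigmaClosure B hB.1 _
      · exact main_key B hB e heB xs M (fun n => hM _ (hsub n)) ξ hconv hnorm hV
  -- the dichotomy
  by_cases hv : ∃ v : X, ∀ k, Tendsto (fun n => d k (x0 n)) atTop (𝓝 (d k v))
  · obtain ⟨v, hvlim⟩ := hv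
    have hξv : ∀ k, d k v = ξ₀ k := fun k => tendsto_nhds_unique (hvlim k) (hx0conv k)
    by_cases hb : ∀ b ∈ B, Tendsto (fun n => b (x0 n)) atTop (𝓝 (b v))
    · -- case α : full σ_B-convergence; Simons applies
      have hvK : v ∈ closure (convexHull ℝ (Set.range x0)) := by
        have h0 : (0:X) ∈ closure (convexHull ℝ (Set.range (fun n => v - x0 n))) := by
          apply simons_boundary B hB _ (‖v‖ + M)
          · intro n
            calc ‖v - x0 n‖ ≤ ‖v‖ + ‖x0 n‖ := norm_sub_le _ _
              _ ≤ ‖v‖ + M := by have := haM (φ n); linarith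
          · intro b hbB
            have h1 : Tendsto (fun n => b v - b (x0 n)) atTop (𝓝 (b v - b v)) :=
              tendsto_const_nhds.sub (hb b hbB)
            rw [sub_self] at h1
            have h2 : (fun n => b (v - x0 n)) = fun n => b v - b (x0 n) := by
              funext n; rw [map_sub]
            rw [h2]
            exact h1
        have hmaps : convexHull ℝ (Set.range (fun n => v - x0 n)) ⊆
            {cx : X | v - cx ∈ convexHull ℝ (Set.range x0)} := by
          apply convexHull_min
          · rintro _ ⟨n, rfl⟩
            simp only [Set.mem_setOf_eq, sub_sub_cancel]
            exact subset_convexHull ℝ _ ⟨n, rfl⟩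
          · intro c1 h1 c2 h2 θ1 θ2 hθ1 hθ2 hθ
            simp only [Set.mem_setOf_eq] at h1 h2 ⊢
            have hv2 : v = θ1 • v + θ2 • v := by rw [← add_smul, hθ, one_smul]
            have hveq : v - (θ1 • c1 + θ2 • c2) = θ1 • (v - c1) + θ2 • (v - c2) := by
              calc v - (θ1 • c1 + θ2 • c2)
                  = (θ1 • v + θ2 • v) - (θ1 • c1 + θ2 • c2) := by rw [← hv2]
                _ = θ1 • (v - c1) + θ2 • (v - c2) := by
                    rw [smul_sub, smul_sub]; abel
            rw [hveq]
            exact (convex_convexHull ℝ _) h1 h2 hθ1 hθ2 hθ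
        rw [Metric.mem_closure_iff] at h0 ⊢
        intro ε hε
        obtain ⟨w, hwco, hwd⟩ := h0 ε hε
        refine ⟨v - w, hmaps hwco, ?_⟩
        rw [dist_eq_norm, sub_sub_cancel]
        rwa [dist_zero_left] at hwd
      apply finish d x0 ξ₀ hdB hx0inj hx0A hx0conv hdnorm
      intro v' hv'
      have hveq : v' = v := hduniq v' v (fun k => by rw [hv' k, hξv k])
      rw [hveq]
      exact hvK
    · -- case: some boundary functional does not converge to b v ; re-extract
      push_neg at hb
      obtain ⟨b₁, hb₁B, hb₁n⟩ := hb
      have hexf : ∃ ε₀ : ℝ, 0 < ε₀ ∧ ∃ᶠ n in atTop, ε₀ ≤ |b₁ (x0 n) - b₁ v| := by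
        by_contra hcon
        push_neg at hcon
        apply hb₁n
        rw [Metric.tendsto_atTop]
        intro ε hε
        have h1 : ∀ᶠ n in atTop, ¬ ε ≤ |b₁ (x0 n) - b₁ v| := by simpa using hcon ε hε
        obtain ⟨N, hN⟩ := eventually_atTop.1 h1
        refine ⟨N, fun n hn => ?_⟩
        rw [Real.dist_eq]
        exact not_le.1 (hN n hn)
      obtain ⟨ε₀, hε₀, hfreq⟩ := hexf
      obtain ⟨ψ₁, hψ₁mono, hψ₁⟩ := Filter.extraction_of_frequently_atTop hfreq
      have hmem : ∀ i, b₁ (x0 (ψ₁ i)) ∈ Set.Icc (-M) M := by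
        intro i
        have h1 : |b₁ (x0 (ψ₁ i))| ≤ M :=
          le_trans (dual_abs_apply_le (hB.1 _ hb₁B) _) (haM _)
        exact abs_le.1 h1
      obtain ⟨γ, hγmem, ψ₂, hψ₂mono, hψ₂tend⟩ := isCompact_Icc.tendsto_subseq hmem
      have hγne : γ ≠ b₁ v := by
        have h1 : Tendsto (fun i => |b₁ (x0 (ψ₁ (ψ₂ i))) - b₁ v|) atTop (𝓝 (|γ - b₁ v|)) := by
          have := (hψ₂tend.sub (tendsto_const_nhds (x := b₁ v))).abs
          exact this
        have h2 : ε₀ ≤ |γ - b₁ v| :=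
          ge_of_tendsto h1 (Eventually.of_forall (fun i => hψ₁ (ψ₂ i)))
        intro hEq
        rw [hEq, sub_self, abs_zero] at h2
        linarith
      set x1 : ℕ → X := fun n => x0 (ψ₁ (ψ₂ n)) with hx1
      set e1 : ℕ → StrongDual ℝ X := fun k => Nat.rec b₁ (fun m _ => d m) k with he1
      set ξ1 : ℕ → ℝ := fun k => Nat.rec γ (fun m _ => ξ₀ m) k with hξ1
      have he1B : ∀ k, e1 k ∈ B := by
        intro k
        cases k with
        | zero => exact hb₁B
        | succ m => exact hdB m
      have hx1inj : Function.Injective x1 :=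
        hx0inj.comp (hψ₁mono.comp hψ₂mono).injective
      have hx1A : ∀ n, x1 n ∈ A := fun n => hx0A _
      have hmono12 : StrictMono (fun n => ψ₁ (ψ₂ n)) := hψ₁mono.comp hψ₂mono
      have hx1conv : ∀ k, Tendsto (fun n => e1 k (x1 n)) atTop (𝓝 (ξ1 k)) := by
        intro k
        cases k with
        | zero => exact hψ₂tend
        | succ m =>
          have h1 : Tendsto (fun n => d m (x0 n)) atTop (𝓝 (ξ₀ m)) := hx0conv m
          exact h1.comp hmono12.tendsto_atTop
      have hnorm1 : ∀ (u : X) (δ : ℝ), 0 < δ → ∃ k, ‖u‖ - δ ≤ e1 k u := by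
        intro u δ hδ
        obtain ⟨k, hk⟩ := hdnorm u δ hδ
        exact ⟨k + 1, hk⟩
      apply finish e1 x1 ξ1 he1B hx1inj hx1A hx1conv hnorm1
      intro v' hv'
      exfalso
      have h1 : ∀ k, d k v' = ξ₀ k := fun k => hv' (k+1)
      have hveq : v' = v := hduniq v' v (fun k => by rw [h1 k, hξv k])
      have h2 : b₁ v' = γ := hv' 0
      rw [hveq] at h2
      exact hγne h2.symm
  · -- case β : no realizer at all
    apply finish d x0 ξ₀ hdB hx0inj hx0A hx0conv hdnorm
    intro v' hv'
    exfalso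
    exact hv ⟨v', fun k => (hv' k) ▸ hx0conv k⟩
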